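/- Let S₁, …, S_B be linear subspaces of ℝ^P, let Q_b denote the orthogonal projection onto S_b, and let Q denote the orthogonal projection onto the intersection ⋂_{b=1}^{B} S_b. Then for every x ∈ ℝ^P, the iterated cyclic products converge: lim_{t → ∞} (Q_B Q_{B−1} ⋯ Q₁)^t x = Q x. In particular, for any row-partition of a matrix M ∈ ℝ^{m × P} into blocks M₁, …, M_B, taking S_b = ker(M_bᵀ M_b) gives I_P − 𝒫(Mᵀ M) = lim_{t → ∞} (∏_b (I_P − 𝒫(M_bᵀ M_b)))^t. -/

import Mathlib

open Matrix Filter RealInnerProductSpace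

variable {E : Type*} [NormedAddCommGroup E] [InnerProductSpace ℝ E] [FiniteDimensional ℝ E]

noncomputable def pj (K : Submodule ℝ E) : E →L[ℝ] E :=
  K.subtypeL.comp (Submodule.orthogonalProjectionOnto K)

lemma pj_mem (K : Submodule ℝ E) (x : E) : pj K x ∈ K := (Submodule.orthogonalProjectionOnto K x).2

lemma pj_of_mem (K : Submodule ℝ E) {x : E} (hx : x ∈ K) : pj K x = x := by
  have := (Submodule.starProjection_eq_self_iff (K := K)).mpr hx
  exact this

lemma pj_norm_le (K : Submodule ℝ E) (x : E) : ‖pj K x‖ ≤ ‖x‖ :=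
  calc ‖pj K x‖ = ‖Submodule.orthogonalProjectionOnto K x‖ := rfl
    _ ≤ ‖Submodule.orthogonalProjectionOnto K‖ * ‖x‖ := (Submodule.orthogonalProjectionOnto K).le_opNorm x
    _ ≤ 1 * ‖x‖ := by gcongr ?_ * ‖x‖; exact Submodule.orthogonalProjectionOnto_norm_le K
    _ = ‖x‖ := one_mul _

lemma pj_norm_eq (K : Submodule ℝ E) (x : E) (h : ‖pj K x‖ = ‖x‖) : pj K x = x := by
  have horth : (inner ℝ (pj K x) (x - pj K x) : ℝ) = 0 := by
    rw [real_inner_comm]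
    exact Submodule.starProjection_inner_eq_zero (K := K) x (pj K x)
      (Submodule.orthogonalProjectionOnto K x).2
  have hsq : ‖x‖ ^ 2 = ‖pj K x‖ ^ 2 + ‖x - pj K x‖ ^ 2 := by
    have := norm_add_sq_real (pj K x) (x - pj K x)
    simpa [horth] using this
  have h0 : ‖x - pj K x‖ ^ 2 = 0 := by rw [h] at hsq; linarith
  have : x - pj K x = 0 :=
    norm_eq_zero.mp (pow_eq_zero_iff (n := 2) (by norm_num) |>.mp h0)
  exact (sub_eq_zero.mp this).symm

lemma pj_mem_orthogonal (F K : Submodule ℝ E) (hFK : F ≤ K) {y : E} (hy : y ∈ Fᗮ) :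
    pj K y ∈ Fᗮ := by
  intro z hz
  have hz' : pj K z = z := pj_of_mem K (hFK hz)
  have : (inner ℝ (pj K z) y : ℝ) = inner ℝ z (pj K y) := by
    exact
      (Submodule.inner_starProjection_left_eq_right (K := K) z y)
  rw [hz'] at this
  rw [← this]
  exact hy z hz  -- careful: need ⟪z, pj K y⟫ = 0 where hy gives ⟪z, y⟫? check direction

section listlemmas

lemma prodpj_norm_le (L : List (Submodule ℝ E)) (x : E) :
    ‖(L.map pj).prod x‖ ≤ ‖x‖ := by
  induction L generalizing x with
  | nil => simp
  | cons K L ih =>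
      simp only [List.map_cons, List.prod_cons, ContinuousLinearMap.mul_apply]
      exact le_trans (pj_norm_le K _) (ih x)

lemma prodpj_norm_eq (L : List (Submodule ℝ E)) (x : E)
    (h : ‖(L.map pj).prod x‖ = ‖x‖) :
    (L.map pj).prod x = x ∧ ∀ K ∈ L, x ∈ K := by
  induction L generalizing x with
  | nil => simp
  | cons K L ih =>
      simp only [List.map_cons, List.prod_cons, ContinuousLinearMap.mul_apply] at h ⊢
      have h1 : ‖pj K ((L.map pj).prod x)‖ ≤ ‖(L.map pj).prod x‖ := pj_norm_le _ _
      have h2 : ‖(L.map pj).prod x‖ ≤ ‖x‖ := prodpj_norm_le L x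
      have hP : ‖(L.map pj).prod x‖ = ‖x‖ := le_antisymm h2 (h ▸ h1)
      obtain ⟨hPx, hmem⟩ := ih x hP
      have : pj K ((L.map pj).prod x) = (L.map pj).prod x :=
        pj_norm_eq K _ (by rw [h, hP])
      rw [hPx] at this ⊢
      refine ⟨this, fun K' hK' => ?_⟩
      rcases List.mem_cons.mp hK' with rfl | hK'
      · rw [← this]; exact pj_mem _ _
      · exact hmem K' hK'

lemma prodpj_fix (L : List (Submodule ℝ E)) (x : E) (h : ∀ K ∈ L, x ∈ K) :
    (L.map pj).prod x = x := by
  induction L with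
  | nil => simp
  | cons K L ih =>
      simp only [List.map_cons, List.prod_cons, ContinuousLinearMap.mul_apply]
      rw [ih fun K' hK' => h K' (List.mem_cons_of_mem _ hK'),
        pj_of_mem K (h K (List.mem_cons_self))]

lemma prodpj_orthogonal (L : List (Submodule ℝ E)) (F : Submodule ℝ E)
    (hF : ∀ K ∈ L, F ≤ K) {y : E} (hy : y ∈ Fᗮ) : (L.map pj).prod y ∈ Fᗮ := by
  induction L generalizing y with
  | nil => simpa
  | cons K L ih =>
      simp only [List.map_cons, List.prod_cons, ContinuousLinearMap.mul_apply]
      exact pj_mem_orthogonal F K (hF K (List.mem_cons_self))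
        (ih (fun K' h' => hF K' (List.mem_cons_of_mem _ h')) hy)

end listlemmas

theorem prodpj_pow_tendsto (L : List (Submodule ℝ E)) (F : Submodule ℝ E)
    (hF : ∀ x : E, x ∈ F ↔ ∀ K ∈ L, x ∈ K) (x : E) :
    Tendsto (fun t : ℕ => ((L.map pj).prod ^ t) x) atTop (nhds (pj F x)) := by
  set T := (L.map pj).prod with hT
  have hFle : ∀ K ∈ L, F ≤ K := fun K hK z hz => (hF z).mp hz K hK
  -- contraction constant on Fᗮ
  obtain ⟨c, hc0, hc1, hc⟩ : ∃ c : ℝ, 0 ≤ c ∧ c < 1 ∧ ∀ y ∈ Fᗮ, ‖T y‖ ≤ c * ‖y‖ := by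
    by_cases hbot : ∀ y ∈ Fᗮ, y = (0 : E)
    · exact ⟨0, le_refl _, one_pos, fun y hy => by simp [hbot y hy]⟩
    · push_neg at hbot
      obtain ⟨y₀, hy₀, hy₀ne⟩ := hbot
      have hcompact : IsCompact ((Fᗮ : Set E) ∩ Metric.sphere 0 1) :=
        (isCompact_sphere (0 : E) 1).inter_left (Fᗮ.closed_of_finiteDimensional)
      have hne : ((Fᗮ : Set E) ∩ Metric.sphere 0 1).Nonempty := by
        refine ⟨‖y₀‖⁻¹ • y₀, Fᗮ.smul_mem _ hy₀, ?_⟩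
        simp [norm_smul, norm_ne_zero_iff.mpr hy₀ne,
          inv_mul_cancel₀ (norm_ne_zero_iff.mpr hy₀ne)]
      obtain ⟨z₀, hz₀, hmax⟩ := hcompact.exists_isMaxOn hne
        ((continuous_norm.comp T.continuous).continuousOn)
      refine ⟨‖T z₀‖, norm_nonneg _, ?_, ?_⟩
      · rcases lt_or_eq_of_le (le_of_le_of_eq (prodpj_norm_le L z₀)
          (mem_sphere_zero_iff_norm.mp hz₀.2)) with h | h
        · exact h
        · exfalso
          obtain ⟨_, hmem⟩ := prodpj_norm_eq L z₀ (by rw [h, mem_sphere_zero_iff_norm.mp hz₀.2])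
          have hz₀F : z₀ ∈ F := (hF z₀).mpr hmem
          have : z₀ = 0 := by
            have := hz₀.1 z₀ hz₀F
            exact inner_self_eq_zero.mp this
          rw [this, map_zero, norm_zero] at h
          exact zero_ne_one h
      · intro y hy
        rcases eq_or_ne y 0 with rfl | hyne
        · simp
        · have hmem : ‖y‖⁻¹ • y ∈ (Fᗮ : Set E) ∩ Metric.sphere 0 1 := by
            refine ⟨Fᗮ.smul_mem _ hy, ?_⟩
            simp [norm_smul, inv_mul_cancel₀ (norm_ne_zero_iff.mpr hyne)]
          have := hmax hmem
          simp only [Set.mem_setOf_eq] at this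
          have h2 : ‖T (‖y‖⁻¹ • y)‖ ≤ ‖T z₀‖ := this
          rw [_root_.map_smul, norm_smul, norm_inv, norm_norm] at h2
          have hpos : (0 : ℝ) < ‖y‖ := norm_pos_iff.mpr hyne
          calc ‖T y‖ = ‖y‖ * (‖y‖⁻¹ * ‖T y‖) := by field_simp
            _ ≤ ‖y‖ * ‖T z₀‖ := by nlinarith
            _ = ‖T z₀‖ * ‖y‖ := mul_comm _ _
  -- decomposition
  have hdecomp : ∀ t : ℕ, (T ^ t) x = pj F x + (T ^ t) (x - pj F x) := by
    intro t
    have hfix : (T ^ t) (pj F x) = pj F x := by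
      induction t with
      | zero => simp
      | succ n ih =>
          rw [pow_succ', ContinuousLinearMap.mul_apply, ih]
          exact prodpj_fix L _ ((hF _).mp (pj_mem F x))
    conv_lhs => rw [show x = pj F x + (x - pj F x) by abel]
    rw [map_add, hfix]
  have hbound : ∀ t : ℕ, ‖(T ^ t) (x - pj F x)‖ ≤ c ^ t * ‖x - pj F x‖ ∧
      (T ^ t) (x - pj F x) ∈ Fᗮ := by
    intro t
    induction t with
    | zero => exact ⟨by simp, Submodule.sub_starProjection_mem_orthogonal (K := F) x⟩
    | succ n ih =>
        constructor
        · rw [pow_succ', ContinuousLinearMap.mul_apply]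
          calc ‖T ((T ^ n) (x - pj F x))‖ ≤ c * ‖(T ^ n) (x - pj F x)‖ := hc _ ih.2
            _ ≤ c * (c ^ n * ‖x - pj F x‖) := by nlinarith [ih.1]
            _ = c ^ (n + 1) * ‖x - pj F x‖ := by ring
        · rw [pow_succ', ContinuousLinearMap.mul_apply]
          exact prodpj_orthogonal L F hFle ih.2
  have htend : Tendsto (fun t : ℕ => (T ^ t) (x - pj F x)) atTop (nhds 0) := by
    have h1 : Tendsto (fun t : ℕ => c ^ t * ‖x - pj F x‖) atTop (nhds 0) := by
      simpa using (tendsto_pow_atTop_nhds_zero_of_lt_one hc0 hc1).mul_const ‖x - pj F x‖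
    refine squeeze_zero_norm (fun t => (hbound t).1) h1
  have h2 := htend.const_add (pj F x)
  rw [add_zero] at h2
  exact h2.congr fun t => (hdecomp t).symm

open Matrix in
lemma mulVec_AtA_eq_zero {ι P : Type*} [Fintype ι] [Fintype P] (A : Matrix ι P ℝ)
    (v : P → ℝ) : (Aᵀ * A) *ᵥ v = 0 ↔ A *ᵥ v = 0 := by
  constructor
  · intro h
    have h0 : (A *ᵥ v) ⬝ᵥ (A *ᵥ v) = 0 := by
      have h1 : v ⬝ᵥ ((Aᵀ * A) *ᵥ v) = 0 := by rw [h]; simp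
      rwa [← Matrix.mulVec_mulVec, Matrix.dotProduct_mulVec, Matrix.vecMul_transpose] at h1
    exact dotProduct_self_eq_zero.mp h0
  · intro h
    rw [← Matrix.mulVec_mulVec, h, Matrix.mulVec_zero]

open Matrix in
lemma mem_ker_AtA {ι : Type*} [Fintype ι] {P : ℕ} (A : Matrix ι (Fin P) ℝ)
    (x : EuclideanSpace ℝ (Fin P)) :
    x ∈ LinearMap.ker (Matrix.toEuclideanLin (Aᵀ * A)) ↔
      A *ᵥ (WithLp.equiv 2 (Fin P → ℝ) x) = 0 := by
  rw [LinearMap.mem_ker, Matrix.toEuclideanLin_apply]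
  rw [← mulVec_AtA_eq_zero A]
  constructor
  · intro h
    have := congrArg (WithLp.equiv 2 (Fin P → ℝ)) h
    simpa using this
  · intro h
    change WithLp.toLp 2 ((Aᵀ * A) *ᵥ (WithLp.equiv 2 (Fin P → ℝ) x)) = 0
    rw [h]
    rfl

/-- **von Neumann–Halperin alternating projections.** For subspaces
`S₁, …, S_B` of `ℝ^P` with orthogonal projections `Q₁, …, Q_B` and `Q` the orthogonal
projection onto `⋂_b S_b`, the cyclic products `(Q_B ⋯ Q₁)^t x` converge to `Q x` for every
`x`.  In particular, for a row-partitioned matrix `M = [M₁; …; M_B]`, taking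
`S_b = ker(M_bᵀ M_b)` gives `I - 𝒫(Mᵀ M) = lim_t (∏_b (I - 𝒫(M_bᵀ M_b)))^t` applied to any
vector. -/
theorem alternating_projections_converge
    (Pdim B : ℕ)
    (S : Fin B → Submodule ℝ (EuclideanSpace ℝ (Fin Pdim)))
    (m : Fin B → ℕ)
    (M : Matrix ((b : Fin B) × Fin (m b)) (Fin Pdim) ℝ) :
    (∀ x : EuclideanSpace ℝ (Fin Pdim),
      Tendsto
        (fun t : ℕ =>
          (((List.ofFn fun i : Fin B =>
              (S i.rev).subtypeL.comp (Submodule.orthogonalProjectionOnto (S i.rev))).prod ^ t) x))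
        atTop
        (nhds ((⨅ b, S b).subtypeL (Submodule.orthogonalProjectionOnto (⨅ b, S b) x)))) ∧
    (∀ x : EuclideanSpace ℝ (Fin Pdim),
      Tendsto
        (fun t : ℕ =>
          (((List.ofFn fun i : Fin B =>
              (LinearMap.ker (Matrix.toEuclideanLin
                  ((M.submatrix (Sigma.mk i.rev) id)ᵀ * M.submatrix (Sigma.mk i.rev) id))).subtypeL.comp
                (Submodule.orthogonalProjectionOnto (LinearMap.ker (Matrix.toEuclideanLin
                  ((M.submatrix (Sigma.mk i.rev) id)ᵀ * M.submatrix (Sigma.mk i.rev) id))))).prod ^ t) x))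
        atTop
        (nhds ((LinearMap.ker (Matrix.toEuclideanLin (Mᵀ * M))).subtypeL
          (Submodule.orthogonalProjectionOnto (LinearMap.ker (Matrix.toEuclideanLin (Mᵀ * M))) x)))) := by
  have main : ∀ (S : Fin B → Submodule ℝ (EuclideanSpace ℝ (Fin Pdim)))
      (x : EuclideanSpace ℝ (Fin Pdim)),
      Tendsto
        (fun t : ℕ =>
          (((List.ofFn fun i : Fin B =>
              (S i.rev).subtypeL.comp (Submodule.orthogonalProjectionOnto (S i.rev))).prod ^ t) x))
        atTop
        (nhds ((⨅ b, S b).subtypeL (Submodule.orthogonalProjectionOnto (⨅ b, S b) x))) := by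
    intro S x
    have hlist : (List.ofFn fun i : Fin B =>
        (S i.rev).subtypeL.comp (Submodule.orthogonalProjectionOnto (S i.rev))) =
        (List.ofFn fun i : Fin B => S i.rev).map pj := by
      rw [List.map_ofFn]; rfl
    have hF : ∀ y : EuclideanSpace ℝ (Fin Pdim),
        y ∈ (⨅ b, S b) ↔ ∀ K ∈ (List.ofFn fun i : Fin B => S i.rev), y ∈ K := by
      intro y
      rw [Submodule.mem_iInf]
      constructor
      · intro h K hK
        obtain ⟨i, rfl⟩ := List.mem_ofFn.mp hK
        exact h _
      · intro h b
        exact h (S b) (List.mem_ofFn.mpr ⟨b.rev, by simp⟩)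
    have := prodpj_pow_tendsto (List.ofFn fun i : Fin B => S i.rev) (⨅ b, S b) hF x
    rw [hlist]
    exact this
  constructor
  · exact main S
  · intro x
    set S' : Fin B → Submodule ℝ (EuclideanSpace ℝ (Fin Pdim)) := fun b =>
      LinearMap.ker (Matrix.toEuclideanLin
        ((M.submatrix (Sigma.mk b) id)ᵀ * M.submatrix (Sigma.mk b) id)) with hS'
    have hker : (⨅ b, S' b) = LinearMap.ker (Matrix.toEuclideanLin (Mᵀ * M)) := by
      ext y
      rw [Submodule.mem_iInf, mem_ker_AtA]
      have hsub : ∀ b, y ∈ S' b ↔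
          (M.submatrix (Sigma.mk b) id) *ᵥ (WithLp.equiv 2 (Fin Pdim → ℝ) y) = 0 :=
        fun b => mem_ker_AtA _ y
      constructor
      · intro h
        funext p
        obtain ⟨b, j⟩ := p
        have := congrFun ((hsub b).mp (h b)) j
        simpa [Matrix.mulVec, Matrix.submatrix] using this
      · intro h b
        rw [hsub b]
        funext j
        have := congrFun h ⟨b, j⟩
        simpa [Matrix.mulVec, Matrix.submatrix] using this
    have := main S' x
    rw [hker] at this
    exact this
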